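/- The integral over the real line ∫_ℝ [ 12(i·x² + x − 2i)/((x−i)³·(x+i)³) + 48·i·x/((x−i)³·(x+i)⁴) ] dx equals −9πi/2. (This is the residue computation in equation (3.72) of the paper, which yields the case (c) boundary contribution −(9/2)π h'(0) Ω₃ after multiplication by −i h'(0) Ω₃.) -/

import Mathlib

open Complex MeasureTheory

open Filter Topology

private lemma xpi_ne (x : ℝ) : (x : ℂ) + I ≠ 0 := fun h => by simpa using congrArg Complex.im h

private lemma xmi_ne (x : ℝ) : (x : ℂ) - I ≠ 0 := fun h => by simpa using congrArg Complex.im h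

private lemma norm_xpi_sq (x : ℝ) : ‖(x : ℂ) + I‖ ^ 2 = 1 + x ^ 2 := by
  rw [Complex.sq_norm]
  simp [Complex.normSq_apply]
  ring

private lemma int_aux (c : ℂ) (k : ℕ) (hk : 2 ≤ k) :
    Integrable fun x : ℝ => c / ((x : ℂ) + I) ^ k := by
  have hcont : Continuous fun x : ℝ => c / ((x : ℂ) + I) ^ k := by
    apply continuous_const.div
    · fun_prop
    · exact fun x => pow_ne_zero _ (xpi_ne x)
  apply Integrable.mono (integrable_inv_one_add_sq.const_mul ‖c‖) hcont.aestronglyMeasurable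
  filter_upwards with x
  have h1 : (1 : ℝ) ≤ ‖(x : ℂ) + I‖ := by
    nlinarith [norm_xpi_sq x, norm_nonneg ((x : ℂ) + I), sq_nonneg x]
  have h2 : (1 + x ^ 2 : ℝ) ≤ ‖(x : ℂ) + I‖ ^ k := by
    rw [← norm_xpi_sq x]
    exact pow_le_pow_right₀ h1 hk
  have h0 : (0:ℝ) < ‖(x : ℂ) + I‖ ^ k := pow_pos (lt_of_lt_of_le one_pos h1) k
  have hrn : ‖(‖c‖ * (1 + x ^ 2)⁻¹ : ℝ)‖ = ‖c‖ * (1 + x ^ 2)⁻¹ :=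
    Real.norm_of_nonneg (by positivity)
  rw [hrn, norm_div, norm_pow, div_le_iff₀ h0]
  calc ‖c‖ = ‖c‖ * (1 + x ^ 2)⁻¹ * (1 + x ^ 2) := by field_simp
    _ ≤ ‖c‖ * (1 + x ^ 2)⁻¹ * ‖(x:ℂ)+I‖ ^ k := mul_le_mul_of_nonneg_left h2 (by positivity)

/-- the residue computation (3.72) of the paper. -/
theorem stmt15 : (∫ x : ℝ, (12 * (I * (x : ℂ) ^ 2 + (x : ℂ) - 2 * I) / (((x : ℂ) - I) ^ 3 * ((x : ℂ) + I) ^ 3) + 48 * I * (x : ℂ) / (((x : ℂ) - I) ^ 3 * ((x : ℂ) + I) ^ 4))) = -9 * (Real.pi : ℂ) * I / 2 := by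
  set g : ℝ → ℂ := fun x => 9 * I / 2 / ((x:ℂ) + I) ^ 2 - 9 / ((x:ℂ) + I) ^ 3 - 6 * I / ((x:ℂ) + I) ^ 4 with hg_def
  set h : ℝ → ℂ := fun x => -(9 * I / 2) * ((((1 + x ^ 2)⁻¹ : ℝ)) : ℂ) with hh_def
  -- integrability
  have hg_int : Integrable g :=
    ((int_aux (9 * I / 2) 2 le_rfl).sub (int_aux 9 3 (by norm_num))).sub
      (int_aux (6 * I) 4 (by norm_num))
  have hh_int : Integrable h := by
    rw [hh_def]
    exact (integrable_inv_one_add_sq.ofReal (𝕜 := ℂ)).const_mul (-(9 * I / 2))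
  -- pointwise decomposition
  have key : ∀ x : ℝ,
      12 * (I * (x : ℂ) ^ 2 + (x : ℂ) - 2 * I) / (((x : ℂ) - I) ^ 3 * ((x : ℂ) + I) ^ 3)
        + 48 * I * (x : ℂ) / (((x : ℂ) - I) ^ 3 * ((x : ℂ) + I) ^ 4) = g x + h x := by
    intro x
    have h1 := xmi_ne x
    have h2 := xpi_ne x
    set D : ℂ := ((x:ℂ) - I) ^ 3 * ((x:ℂ) + I) ^ 4 with hD_def
    have hD : D ≠ 0 := mul_ne_zero (pow_ne_zero _ h1) (pow_ne_zero _ h2)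
    have key5 : ∀ c d n : ℂ, d ≠ 0 → c * D = n * d → c / d = n / D := by
      intro c d n hd hEq
      rw [div_eq_div_iff hd hD]
      exact hEq
    have hfac : (1 + (x:ℂ) ^ 2) = ((x:ℂ) - I) * ((x:ℂ) + I) := by
      linear_combination Complex.I_sq
    have eA : 12 * (I * (x : ℂ) ^ 2 + (x : ℂ) - 2 * I) / (((x : ℂ) - I) ^ 3 * ((x : ℂ) + I) ^ 3)
        = (12 * (I * (x : ℂ) ^ 2 + (x : ℂ) - 2 * I) * ((x:ℂ) + I)) / D := by
      apply key5 _ _ _ (mul_ne_zero (pow_ne_zero _ h1) (pow_ne_zero _ h2))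
      rw [hD_def]; ring
    have eB : 48 * I * (x : ℂ) / (((x : ℂ) - I) ^ 3 * ((x : ℂ) + I) ^ 4)
        = (48 * I * (x : ℂ)) / D := by rw [hD_def]
    have e1 : 9 * I / 2 / ((x:ℂ) + I) ^ 2
        = (9 * I / 2 * ((x:ℂ) - I) ^ 3 * ((x:ℂ) + I) ^ 2) / D := by
      apply key5 _ _ _ (pow_ne_zero _ h2)
      rw [hD_def]; ring
    have e2 : (9:ℂ) / ((x:ℂ) + I) ^ 3 = (9 * ((x:ℂ) - I) ^ 3 * ((x:ℂ) + I)) / D := by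
      apply key5 _ _ _ (pow_ne_zero _ h2)
      rw [hD_def]; ring
    have e3 : 6 * I / ((x:ℂ) + I) ^ 4 = (6 * I * ((x:ℂ) - I) ^ 3) / D := by
      apply key5 _ _ _ (pow_ne_zero _ h2)
      rw [hD_def]; ring
    have e4 : -(9 * I / 2) * ((((1 + x ^ 2)⁻¹ : ℝ)) : ℂ)
        = (-(9 * I / 2) * ((x:ℂ) - I) ^ 2 * ((x:ℂ) + I) ^ 3) / D := by
      push_cast
      rw [← div_eq_mul_inv]
      apply key5 _ _ _ (by rw [hfac]; exact mul_ne_zero h1 h2)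
      rw [hD_def]
      linear_combination ((9 * I / 2) * ((x:ℂ) - I) ^ 2 * ((x:ℂ) + I) ^ 3) * Complex.I_sq
    simp only [hg_def, hh_def, eA, eB, e1, e2, e3, e4, ← add_div, div_sub_div_same]
    rw [div_eq_div_iff hD hD]
    linear_combination ((12 * (x:ℂ) ^ 2 + 9 * (x:ℂ) ^ 4 + 36 * (x:ℂ) * I - 18 * (x:ℂ) ^ 2 * I ^ 2
      - 24 * I ^ 2 + 9 * I ^ 4) * D) * Complex.I_sq
  -- integral of g is 0 via FTC
  have hGzero : (∫ x : ℝ, g x) = 0 := by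
    set G : ℝ → ℂ := fun x => (fun w : ℂ => -(9 * I / 2) * w⁻¹ + 9 / 2 * (w⁻¹) ^ 2
      + 2 * I * (w⁻¹) ^ 3) ((x:ℂ) + I) with hG_def
    have hderiv : ∀ x : ℝ, HasDerivAt G (g x) x := by
      intro x
      have h2 := xpi_ne x
      have hu : HasDerivAt (fun x : ℝ => (x : ℂ) + I) 1 x := by
        simpa using (Complex.ofRealCLM.hasDerivAt (x := x)).add_const I
      have hinv : HasDerivAt (fun w : ℂ => w⁻¹) (-(((x:ℂ)+I) ^ 2)⁻¹) ((x:ℂ)+I) :=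
        hasDerivAt_inv h2
      have H1 : HasDerivAt (fun w : ℂ => -(9 * I / 2) * w⁻¹ + 9 / 2 * (w⁻¹) ^ 2
          + 2 * I * (w⁻¹) ^ 3)
          (-(9 * I / 2) * (-(((x:ℂ)+I) ^ 2)⁻¹)
            + 9 / 2 * ((2:ℕ) * (((x:ℂ)+I)⁻¹) ^ 1 * (-(((x:ℂ)+I) ^ 2)⁻¹))
            + 2 * I * ((3:ℕ) * (((x:ℂ)+I)⁻¹) ^ 2 * (-(((x:ℂ)+I) ^ 2)⁻¹)))
          ((x:ℂ)+I) :=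
        ((hinv.const_mul _).add ((hinv.pow 2).const_mul _)).add ((hinv.pow 3).const_mul _)
      have hcomp := H1.comp x hu
      rw [hG_def]
      refine hcomp.congr_deriv ?_
      rw [hg_def]
      simp only [div_eq_mul_inv, ← inv_pow, mul_one, Nat.cast_ofNat]
      ring
    have hnormbot : Tendsto (fun x : ℝ => (x:ℂ) + I) atBot (Bornology.cobounded ℂ) := by
      rw [← tendsto_norm_atTop_iff_cobounded]
      apply tendsto_atTop_mono (fun x : ℝ => ?_) tendsto_neg_atBot_atTop
      calc -x ≤ |x| := neg_le_abs x
        _ = |((x:ℂ)+I).re| := by simp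
        _ ≤ ‖(x:ℂ)+I‖ := Complex.abs_re_le_norm _
    have hnormtop : Tendsto (fun x : ℝ => (x:ℂ) + I) atTop (Bornology.cobounded ℂ) := by
      rw [← tendsto_norm_atTop_iff_cobounded]
      apply tendsto_atTop_mono (fun x : ℝ => ?_) tendsto_id
      calc (id x : ℝ) ≤ |x| := le_abs_self x
        _ = |((x:ℂ)+I).re| := by simp
        _ ≤ ‖(x:ℂ)+I‖ := Complex.abs_re_le_norm _
    have hlim : ∀ l : Filter ℝ, Tendsto (fun x : ℝ => (x:ℂ) + I) l (Bornology.cobounded ℂ) →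
        Tendsto G l (𝓝 0) := by
      intro l hl
      have hinv : Tendsto (fun x : ℝ => ((x:ℂ) + I)⁻¹) l (𝓝 0) :=
        tendsto_inv₀_cobounded.comp hl
      have hT : Tendsto (fun x : ℝ => -(9 * I / 2) * ((x:ℂ)+I)⁻¹ + 9 / 2 * (((x:ℂ)+I)⁻¹) ^ 2
          + 2 * I * (((x:ℂ)+I)⁻¹) ^ 3) l
          (𝓝 (-(9 * I / 2) * 0 + 9 / 2 * 0 ^ 2 + 2 * I * 0 ^ 3)) :=
        ((hinv.const_mul _).add ((hinv.pow 2).const_mul _)).add ((hinv.pow 3).const_mul _)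
      simpa [hG_def] using hT
    have := integral_of_hasDerivAt_of_tendsto hderiv hg_int (hlim _ hnormbot) (hlim _ hnormtop)
    simpa using this
  have hHval : (∫ x : ℝ, h x) = -(9 * I / 2) * (Real.pi : ℂ) := by
    rw [hh_def]
    rw [integral_const_mul]
    congr 1
    rw [← integral_univ_inv_one_add_sq]
    exact integral_ofReal
  calc (∫ x : ℝ, (12 * (I * (x : ℂ) ^ 2 + (x : ℂ) - 2 * I) / (((x : ℂ) - I) ^ 3 * ((x : ℂ) + I) ^ 3) + 48 * I * (x : ℂ) / (((x : ℂ) - I) ^ 3 * ((x : ℂ) + I) ^ 4)))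
      = ∫ x : ℝ, (g x + h x) := integral_congr_ae (Filter.Eventually.of_forall key)
    _ = (∫ x : ℝ, g x) + ∫ x : ℝ, h x := integral_add hg_int hh_int
    _ = -9 * (Real.pi : ℂ) * I / 2 := by rw [hGzero, hHval]; ring
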